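/- Let (E,d) be a compact metric space and (μ_x)_{x∈E} a family of Borel probability measures on C(E,E) concentrated on Lipschitz maps, and let α ∈ (0,1]. Set r := sup_{x≠y} ∫ (d(T(x),T(y))/d(x,y))^α μ_x(dT) and R_α := sup_{x≠y} ‖μ_x − μ_y‖_TV / d(x,y)^α, and assume both are finite. Then for every φ ∈ H_α(E): m_α(Pφ) ≤ r · m_α(φ) + R_α · sup|φ|, and hence ‖Pφ‖_α ≤ r ‖φ‖_α + (1 + R_α) sup|φ|. -/

import Mathlib

open MeasureTheory Filter Set
lemma my_le_sub_add {Ω : Type*} [MeasurableSpace Ω] (μ ν : Measure Ω)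
    [IsFiniteMeasure μ] [IsFiniteMeasure ν] : μ ≤ (μ - ν) + ν := by
  obtain ⟨s, hs, h1, h2⟩ := hahn_decomposition (μ := μ) (ν := ν)
  set ρ : Measure Ω := μ.restrict s - ν.restrict s with hρ
  have hle : ν.restrict s ≤ μ.restrict s := by
    rw [Measure.le_iff]
    intro t ht
    rw [Measure.restrict_apply ht, Measure.restrict_apply ht]
    exact h1 _ (ht.inter hs) (inter_subset_right)
  have hρle : ρ ≤ μ - ν := by
    apply le_sInf
    intro d hd
    rw [Measure.le_iff]
    intro t ht
    rw [hρ, Measure.sub_apply ht hle, Measure.restrict_apply ht, Measure.restrict_apply ht]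
    have hdν : μ (t ∩ s) ≤ d (t ∩ s) + ν (t ∩ s) := hd (t ∩ s)
    refine le_trans (tsub_le_iff_right.mpr hdν) (measure_mono inter_subset_left)
  refine le_trans ?_ (add_le_add_left hρle ν)
  rw [Measure.le_iff]
  intro t ht
  have hsplit : μ t = μ (t ∩ s) + μ (t \ s) := (measure_inter_add_diff t hs).symm
  have hρt : ρ t = μ (t ∩ s) - ν (t ∩ s) := by
    rw [hρ, Measure.sub_apply ht hle, Measure.restrict_apply ht, Measure.restrict_apply ht]
  have h2' : μ (t \ s) ≤ ν (t \ s) := h2 _ (ht.diff hs) (diff_subset_iff.mpr (by simp))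
  have hν1 : ν (t ∩ s) ≤ μ (t ∩ s) := h1 _ (ht.inter hs) inter_subset_right
  have : (ρ + ν) t = ρ t + ν t := rfl
  rw [this, hρt, hsplit]
  have hν2 : ν (t ∩ s) + ν (t \ s) = ν t := measure_inter_add_diff t hs
  calc μ (t ∩ s) + μ (t \ s)
      ≤ μ (t ∩ s) + ν (t \ s) := add_le_add_right h2' _
    _ = (μ (t ∩ s) - ν (t ∩ s)) + ν (t ∩ s) + ν (t \ s) := by
        rw [tsub_add_cancel_of_le hν1]
    _ = (μ (t ∩ s) - ν (t ∩ s)) + ν t := by rw [add_assoc, hν2]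

lemma my_half_bound {Ω : Type*} [MeasurableSpace Ω] (μ ν : Measure Ω)
    [IsProbabilityMeasure μ] [IsProbabilityMeasure ν] (h : Ω → ℝ) (hm : Measurable h)
    (S : ℝ) (hS0 : 0 ≤ S) (h0 : ∀ ω, 0 ≤ h ω) (hS : ∀ ω, h ω ≤ S) :
    (∫ ω, h ω ∂μ) - ∫ ω, h ω ∂ν ≤ S * ((μ - ν) univ).toReal := by
  set A := ∫⁻ ω, ENNReal.ofReal (h ω) ∂μ with hA
  set B := ∫⁻ ω, ENNReal.ofReal (h ω) ∂ν with hB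
  have hBound : ∀ (κ : Measure Ω), ∫⁻ ω, ENNReal.ofReal (h ω) ∂κ ≤ ENNReal.ofReal S * κ univ := by
    intro κ
    calc ∫⁻ ω, ENNReal.ofReal (h ω) ∂κ ≤ ∫⁻ _, ENNReal.ofReal S ∂κ :=
          lintegral_mono fun ω => ENNReal.ofReal_le_ofReal (hS ω)
      _ = ENNReal.ofReal S * κ univ := lintegral_const _
  have hstep : A ≤ ENNReal.ofReal S * ((μ - ν) univ) + B := by
    calc A ≤ ∫⁻ ω, ENNReal.ofReal (h ω) ∂((μ - ν) + ν) :=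
          lintegral_mono' (my_le_sub_add μ ν) le_rfl
      _ = (∫⁻ ω, ENNReal.ofReal (h ω) ∂(μ - ν)) + B := lintegral_add_measure _ _ _
      _ ≤ ENNReal.ofReal S * ((μ - ν) univ) + B := add_le_add_left (hBound _) _
  have hsubfin : (μ - ν) univ ≠ ⊤ := by
    refine ne_top_of_le_ne_top (measure_ne_top μ univ) (Measure.le_iff'.mp Measure.sub_le univ)
  have hBfin : B ≠ ⊤ := by
    refine ne_top_of_le_ne_top ?_ (hBound ν)
    simp [measure_univ]
  have hAfin : A ≠ ⊤ := by
    refine ne_top_of_le_ne_top ?_ (hBound μ)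
    simp [measure_univ]
  have hμeq : ∫ ω, h ω ∂μ = A.toReal :=
    integral_eq_lintegral_of_nonneg_ae (ae_of_all _ h0) hm.aestronglyMeasurable
  have hνeq : ∫ ω, h ω ∂ν = B.toReal :=
    integral_eq_lintegral_of_nonneg_ae (ae_of_all _ h0) hm.aestronglyMeasurable
  rw [hμeq, hνeq]
  have htr : A.toReal ≤ (ENNReal.ofReal S * ((μ - ν) univ)).toReal + B.toReal := by
    rw [← ENNReal.toReal_add (by finiteness) hBfin]
    exact ENNReal.toReal_mono (by finiteness) hstep
  have : (ENNReal.ofReal S * ((μ - ν) univ)).toReal = S * ((μ - ν) univ).toReal := by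
    rw [ENNReal.toReal_mul, ENNReal.toReal_ofReal hS0]
  linarith [htr, this ▸ htr]

lemma my_tv_bound {Ω : Type*} [MeasurableSpace Ω] (μ ν : Measure Ω)
    [IsProbabilityMeasure μ] [IsProbabilityMeasure ν] (g : Ω → ℝ) (hm : Measurable g)
    (S : ℝ) (hS0 : 0 ≤ S) (hS : ∀ ω, |g ω| ≤ S) :
    |(∫ ω, g ω ∂μ) - ∫ ω, g ω ∂ν| ≤ S * (((μ - ν) univ) + ((ν - μ) univ)).toReal := by
  set gp : Ω → ℝ := fun ω => max (g ω) 0 with hgp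
  set gn : Ω → ℝ := fun ω => max (-g ω) 0 with hgn
  have hmp : Measurable gp := hm.max measurable_const
  have hmn : Measurable gn := hm.neg.max measurable_const
  have hgp0 : ∀ ω, 0 ≤ gp ω := fun ω => le_max_right _ _
  have hgn0 : ∀ ω, 0 ≤ gn ω := fun ω => le_max_right _ _
  have hgpS : ∀ ω, gp ω ≤ S := fun ω => max_le ((le_abs_self _).trans (hS ω)) hS0
  have hgnS : ∀ ω, gn ω ≤ S := fun ω => max_le ((neg_le_abs _).trans (hS ω)) hS0
  have hdecomp : ∀ ω, g ω = gp ω - gn ω := fun ω => by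
    simp [hgp, hgn, max_zero_sub_max_neg_zero_eq_self]
  have hint : ∀ (κ : Measure Ω) [IsProbabilityMeasure κ] (f : Ω → ℝ),
      Measurable f → (∀ ω, |f ω| ≤ S) → Integrable f κ := by
    intro κ _ f hf hb
    exact (integrable_const S).mono' hf.aestronglyMeasurable
      (ae_of_all _ fun ω => by simpa using hb ω)
  have hintp : ∀ (κ : Measure Ω) [IsProbabilityMeasure κ], Integrable gp κ := fun κ _ =>
    hint κ gp hmp fun ω => by rw [abs_of_nonneg (hgp0 ω)]; exact hgpS ω
  have hintn : ∀ (κ : Measure Ω) [IsProbabilityMeasure κ], Integrable gn κ := fun κ _ =>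
    hint κ gn hmn fun ω => by rw [abs_of_nonneg (hgn0 ω)]; exact hgnS ω
  have hsplit : ∀ (κ : Measure Ω) [IsProbabilityMeasure κ],
      ∫ ω, g ω ∂κ = (∫ ω, gp ω ∂κ) - ∫ ω, gn ω ∂κ := by
    intro κ _
    rw [← integral_sub (hintp κ) (hintn κ)]
    exact integral_congr_ae (ae_of_all _ fun ω => hdecomp ω)
  rw [hsplit μ, hsplit ν]
  have hab : ((μ - ν) univ).toReal + ((ν - μ) univ).toReal
      = (((μ - ν) univ) + ((ν - μ) univ)).toReal := by
    rw [ENNReal.toReal_add]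
    · exact ne_top_of_le_ne_top (measure_ne_top μ univ) (Measure.le_iff'.mp Measure.sub_le univ)
    · exact ne_top_of_le_ne_top (measure_ne_top ν univ) (Measure.le_iff'.mp Measure.sub_le univ)
  have h1 := my_half_bound μ ν gp hmp S hS0 hgp0 hgpS
  have h2 := my_half_bound ν μ gn hmn S hS0 hgn0 hgnS
  have h3 := my_half_bound ν μ gp hmp S hS0 hgp0 hgpS
  have h4 := my_half_bound μ ν gn hmn S hS0 hgn0 hgnS
  rw [abs_le]
  constructor
  · nlinarith [h3, h4, hab]
  · nlinarith [h1, h2, hab]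

-- Continuity from Hölder bound
lemma my_holder_continuous {E : Type*} [MetricSpace E] (φ : E → ℝ) (α : ℝ) (hα0 : 0 < α)
    (M : ℝ) (hM : ∀ x y : E, |φ x - φ y| ≤ M * dist x y ^ α) : Continuous φ := by
  have hM' : ∀ x y : E, |φ x - φ y| ≤ (max M 1) * dist x y ^ α := fun x y =>
    (hM x y).trans (mul_le_mul_of_nonneg_right (le_max_left _ _)
      (Real.rpow_nonneg dist_nonneg _))
  have hMpos : (0:ℝ) < max M 1 := lt_of_lt_of_le one_pos (le_max_right _ _)
  rw [Metric.continuous_iff]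
  intro x ε hε
  refine ⟨(ε / max M 1) ^ α⁻¹, Real.rpow_pos_of_pos (div_pos hε hMpos) _, fun y hy => ?_⟩
  rw [Real.dist_eq]
  calc |φ y - φ x| ≤ (max M 1) * dist y x ^ α := hM' y x
    _ < (max M 1) * ((ε / max M 1) ^ α⁻¹) ^ α := by
        refine mul_lt_mul_of_pos_left ?_ hMpos
        exact Real.rpow_lt_rpow dist_nonneg hy hα0
    _ = ε := by
        rw [Real.rpow_inv_rpow (le_of_lt (div_pos hε hMpos)) hα0.ne',
          mul_div_cancel₀ _ hMpos.ne']



/-- Markov operator of a place-dependent iterated function system: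
`P φ x = ∫ φ (T x) dμ_x(T)`. -/
noncomputable def IFSPx {E : Type*} [MetricSpace E] [MeasurableSpace C(E, E)]
    (μx : E → Measure C(E, E)) (φ : E → ℝ) : E → ℝ :=
  fun x => ∫ T : C(E, E), φ (T x) ∂(μx x)

/-- `sup |φ|`. -/
noncomputable def supAbs {E : Type*} (φ : E → ℝ) : ℝ := ⨆ x, |φ x|

/-- The α-Hölder seminorm `m_α(φ)`, expressed as the least admissible Hölder constant. -/
noncomputable def holderSemi {E : Type*} [MetricSpace E] (α : ℝ) (φ : E → ℝ) : ℝ :=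
  sInf {m : ℝ | 0 ≤ m ∧ ∀ x y : E, |φ x - φ y| ≤ m * dist x y ^ α}

/-- The α-Hölder norm `‖φ‖_α = sup|φ| + m_α(φ)`. -/
noncomputable def holderNorm {E : Type*} [MetricSpace E] (α : ℝ) (φ : E → ℝ) : ℝ :=
  supAbs φ + holderSemi α φ

/-- Total variation norm `‖μ − ν‖_TV` of the difference of two (finite) measures. -/
noncomputable def tvDist {Ω : Type*} [MeasurableSpace Ω] (μ ν : Measure Ω) : ENNReal :=
  (μ - ν) Set.univ + (ν - μ) Set.univ

/-- with `r := sup_{x≠y} ∫ (d(Tx,Ty)/d(x,y))^α dμ_x(T)` and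
`R_α := sup_{x≠y} ‖μ_x − μ_y‖_TV / d(x,y)^α` both finite, every α-Hölder `φ` satisfies
`m_α(Pφ) ≤ r m_α(φ) + R_α sup|φ|`, hence `‖Pφ‖_α ≤ r ‖φ‖_α + (1+R_α) sup|φ|`. -/
theorem stmt4 {E : Type*} [MetricSpace E] [CompactSpace E] [Nonempty E]
    [MeasurableSpace C(E, E)] [BorelSpace C(E, E)]
    (μx : E → Measure C(E, E)) (hprob : ∀ x, IsProbabilityMeasure (μx x))
    (hLip : ∀ x, μx x {T : C(E, E) | ∃ K : NNReal, LipschitzWith K ⇑T} = 1)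
    (α : ℝ) (hα0 : 0 < α) (hα1 : α ≤ 1)
    (r : ℝ) (hr0 : 0 ≤ r)
    (hr : ∀ x y : E, x ≠ y →
      ∫⁻ T : C(E, E), ENNReal.ofReal ((dist (T x) (T y) / dist x y) ^ α) ∂(μx x)
        ≤ ENNReal.ofReal r)
    (Rα : ℝ) (hRα0 : 0 ≤ Rα)
    (hR : ∀ x y : E, x ≠ y →
      tvDist (μx x) (μx y) ≤ ENNReal.ofReal (Rα * dist x y ^ α))
    (φ : E → ℝ) (hφ : ∃ M : ℝ, ∀ x y : E, |φ x - φ y| ≤ M * dist x y ^ α) :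
    (∀ x y : E, |IFSPx μx φ x - IFSPx μx φ y|
        ≤ (r * holderSemi α φ + Rα * supAbs φ) * dist x y ^ α) ∧
      holderNorm α (IFSPx μx φ) ≤ r * holderNorm α φ + (1 + Rα) * supAbs φ := by

  classical
  obtain ⟨M, hM⟩ := hφ
  have hφc : Continuous φ := my_holder_continuous φ α hα0 M hM
  -- sup |φ|
  set S := supAbs φ with hSdef
  have hbddA : BddAbove (range fun z : E => |φ z|) := by
    have h := (isCompact_univ (X := E)).bddAbove_image hφc.abs.continuousOn
    rwa [image_univ] at h
  have hSabs : ∀ z, |φ z| ≤ S := fun z => le_ciSup hbddA z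
  have hS0 : 0 ≤ S := le_trans (abs_nonneg _) (hSabs (Classical.arbitrary E))
  -- Hölder seminorm of φ
  set mφ := holderSemi α φ with hmdef
  have hne : {m : ℝ | 0 ≤ m ∧ ∀ x y : E, |φ x - φ y| ≤ m * dist x y ^ α}.Nonempty :=
    ⟨max M 0, le_max_right _ _, fun x y => (hM x y).trans
      (mul_le_mul_of_nonneg_right (le_max_left _ _) (Real.rpow_nonneg dist_nonneg _))⟩
  have hm0 : 0 ≤ mφ := le_csInf hne fun m hm => hm.1
  have hmh : ∀ x y : E, |φ x - φ y| ≤ mφ * dist x y ^ α := by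
    intro x y
    by_cases hxy : x = y
    · subst hxy
      simp [Real.zero_rpow hα0.ne']
    · have hd : 0 < dist x y := dist_pos.mpr hxy
      have hdα : 0 < dist x y ^ α := Real.rpow_pos_of_pos hd α
      have hdiv : |φ x - φ y| / dist x y ^ α ≤ mφ :=
        le_csInf hne fun m hm => (div_le_iff₀ hdα).mpr (hm.2 x y)
      exact (div_le_iff₀ hdα).mp hdiv
  have hev : ∀ z : E, Continuous fun T : C(E,E) => φ (T z) := fun z =>
    hφc.comp (continuous_eval_const z)
  have hint : ∀ z w : E, Integrable (fun T : C(E,E) => φ (T z)) (μx w) := by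
    intro z w
    haveI := hprob w
    exact (integrable_const S).mono' (hev z).aestronglyMeasurable
      (ae_of_all _ fun T => by simpa [Real.norm_eq_abs] using hSabs (T z))
  have hmain : ∀ x y : E, |IFSPx μx φ x - IFSPx μx φ y|
      ≤ (r * mφ + Rα * S) * dist x y ^ α := by
    intro x y
    by_cases hxy : x = y
    · subst hxy
      simp [Real.zero_rpow hα0.ne']
    haveI := hprob x; haveI := hprob y
    have hd : 0 < dist x y := dist_pos.mpr hxy
    have hdα : 0 < dist x y ^ α := Real.rpow_pos_of_pos hd α
    have hcontsub : Continuous fun T : C(E,E) => φ (T x) - φ (T y) := (hev x).sub (hev y)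
    have hAbs_eq : ∫ T, |φ (T x) - φ (T y)| ∂(μx x)
        = (∫⁻ T, ENNReal.ofReal |φ (T x) - φ (T y)| ∂(μx x)).toReal :=
      integral_eq_lintegral_of_nonneg_ae (ae_of_all _ fun T => abs_nonneg _)
        hcontsub.abs.aestronglyMeasurable
    have hpoint : ∀ T : C(E,E), |φ (T x) - φ (T y)|
        ≤ (mφ * dist x y ^ α) * ((dist (T x) (T y) / dist x y) ^ α) := by
      intro T
      have h1 : |φ (T x) - φ (T y)| ≤ mφ * dist (T x) (T y) ^ α := hmh _ _
      have h2 : dist (T x) (T y) ^ α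
          = (dist (T x) (T y) / dist x y) ^ α * dist x y ^ α := by
        rw [← Real.mul_rpow (div_nonneg dist_nonneg dist_nonneg) dist_nonneg,
          div_mul_cancel₀ _ hd.ne']
      rw [h2] at h1
      nlinarith [h1]
    have hlA : ∫⁻ T, ENNReal.ofReal |φ (T x) - φ (T y)| ∂(μx x)
        ≤ ENNReal.ofReal (mφ * dist x y ^ α * r) := by
      calc ∫⁻ T, ENNReal.ofReal |φ (T x) - φ (T y)| ∂(μx x)
          ≤ ∫⁻ T, ENNReal.ofReal (mφ * dist x y ^ α)
              * ENNReal.ofReal ((dist (T x) (T y) / dist x y) ^ α) ∂(μx x) := by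
            refine lintegral_mono fun T => ?_
            rw [← ENNReal.ofReal_mul (mul_nonneg hm0 hdα.le)]
            exact ENNReal.ofReal_le_ofReal (hpoint T)
        _ = ENNReal.ofReal (mφ * dist x y ^ α)
              * ∫⁻ T, ENNReal.ofReal ((dist (T x) (T y) / dist x y) ^ α) ∂(μx x) :=
            lintegral_const_mul' _ _ ENNReal.ofReal_ne_top
        _ ≤ ENNReal.ofReal (mφ * dist x y ^ α) * ENNReal.ofReal r :=
            mul_le_mul_right (hr x y hxy) _
        _ = ENNReal.ofReal (mφ * dist x y ^ α * r) :=
            (ENNReal.ofReal_mul (mul_nonneg hm0 hdα.le)).symm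
    have hA : |∫ T, (φ (T x) - φ (T y)) ∂(μx x)| ≤ mφ * dist x y ^ α * r := by
      have h1 : |∫ T, (φ (T x) - φ (T y)) ∂(μx x)| ≤ ∫ T, |φ (T x) - φ (T y)| ∂(μx x) := by
        simpa [Real.norm_eq_abs] using
          norm_integral_le_integral_norm (μ := μx x) (fun T : C(E,E) => φ (T x) - φ (T y))
      refine h1.trans ?_
      rw [hAbs_eq]
      exact ENNReal.toReal_le_of_le_ofReal
        (mul_nonneg (mul_nonneg hm0 hdα.le) hr0) hlA
    have hB : |(∫ T, φ (T y) ∂(μx x)) - ∫ T, φ (T y) ∂(μx y)| ≤ S * (Rα * dist x y ^ α) := by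
      have h1 := my_tv_bound (μx x) (μx y) (fun T => φ (T y)) (hev y).measurable S hS0
        (fun T => hSabs _)
      refine h1.trans (mul_le_mul_of_nonneg_left ?_ hS0)
      exact ENNReal.toReal_le_of_le_ofReal (mul_nonneg hRα0 hdα.le)
        (by simpa [tvDist] using hR x y hxy)
    have hsplit : IFSPx μx φ x - IFSPx μx φ y
        = (∫ T, (φ (T x) - φ (T y)) ∂(μx x))
          + ((∫ T, φ (T y) ∂(μx x)) - ∫ T, φ (T y) ∂(μx y)) := by
      simp only [IFSPx]
      rw [integral_sub (hint x x) (hint y x)]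
      ring
    calc |IFSPx μx φ x - IFSPx μx φ y|
        ≤ |∫ T, (φ (T x) - φ (T y)) ∂(μx x)|
          + |(∫ T, φ (T y) ∂(μx x)) - ∫ T, φ (T y) ∂(μx y)| := hsplit ▸ abs_add_le _ _
      _ ≤ mφ * dist x y ^ α * r + S * (Rα * dist x y ^ α) := add_le_add hA hB
      _ = (r * mφ + Rα * S) * dist x y ^ α := by ring
  refine ⟨hmain, ?_⟩
  have hC0 : 0 ≤ r * mφ + Rα * S := by positivity
  have hPsem : holderSemi α (IFSPx μx φ) ≤ r * mφ + Rα * S :=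
    csInf_le ⟨0, fun m hm => hm.1⟩ ⟨hC0, hmain⟩
  have hPsup : supAbs (IFSPx μx φ) ≤ S := by
    refine ciSup_le fun x => ?_
    haveI := hprob x
    have h := norm_integral_le_of_norm_le_const (μ := μx x) (f := fun T : C(E,E) => φ (T x))
      (C := S) (ae_of_all _ fun T => by simpa [Real.norm_eq_abs] using hSabs (T x))
    simpa [IFSPx, Real.norm_eq_abs, measure_univ] using h
  have hrS : 0 ≤ r * S := mul_nonneg hr0 hS0
  unfold holderNorm
  rw [← hSdef, ← hmdef]
  nlinarith [hPsem, hPsup, hrS]
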